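/- Let K ≥ 1, let q : Fin K → ℝ≥0 be power splits, w : Fin K → ℝ≥0 with w indexed so user j has interference-plus-noise w_j, and define c_j = log(1 + q_j / (∑_{h<j} q_h + w_j)) (natural log), assuming all denominators are positive. Then, with the convention w_0' = 0 where w'_t = w_t shifted, the total power satisfies ∑_{j} q_j = ∑_{t=1}^{K} (w_t - w_{t-1}) · e^{∑_{k=t}^{K} c_k} - w_K, where w_0 := 0. -/

import Mathlib

theorem stmt1 (K : ℕ) (hK : 1 ≤ K) (q w c : ℕ → ℝ)
    (hq : ∀ j ∈ Finset.Icc 1 K, 0 ≤ q j)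
    (hw0 : w 0 = 0) (hw : ∀ j ∈ Finset.Icc 1 K, 0 ≤ w j)
    (hden : ∀ j ∈ Finset.Icc 1 K, 0 < (∑ h ∈ Finset.Icc 1 (j - 1), q h) + w j)
    (hc : ∀ j ∈ Finset.Icc 1 K,
      c j = Real.log (1 + q j / ((∑ h ∈ Finset.Icc 1 (j - 1), q h) + w j))) :
    ∑ j ∈ Finset.Icc 1 K, q j =
      (∑ t ∈ Finset.Icc 1 K, (w t - w (t - 1)) * Real.exp (∑ k ∈ Finset.Icc t K, c k)) - w K := by
  -- key step lemma
  have key : ∀ j ∈ Finset.Icc 1 K,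
      ((∑ h ∈ Finset.Icc 1 (j - 1), q h) + w j) * Real.exp (c j)
        = (∑ h ∈ Finset.Icc 1 j, q h) + w j := by
    intro j hj
    have hD := hden j hj
    have hjm : 1 ≤ j := (Finset.mem_Icc.mp hj).1
    have hqj := hq j hj
    have hpos : 0 < 1 + q j / ((∑ h ∈ Finset.Icc 1 (j - 1), q h) + w j) := by
      have : 0 ≤ q j / ((∑ h ∈ Finset.Icc 1 (j - 1), q h) + w j) := div_nonneg hqj hD.le
      linarith
    have hexp : Real.exp (c j) = 1 + q j / ((∑ h ∈ Finset.Icc 1 (j - 1), q h) + w j) := by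
      rw [hc j hj, Real.exp_log hpos]
    have hsum : ∑ h ∈ Finset.Icc 1 j, q h = (∑ h ∈ Finset.Icc 1 (j - 1), q h) + q j := by
      have h2 := Finset.sum_Icc_succ_top (show 1 ≤ (j - 1) + 1 by omega) q
      rw [show j - 1 + 1 = j by omega] at h2
      exact h2
    rw [hexp, hsum]
    field_simp
    ring
  have main : ∀ n, 1 ≤ n → n ≤ K →
      (∑ h ∈ Finset.Icc 1 n, q h) + w n
        = ∑ t ∈ Finset.Icc 1 n, (w t - w (t - 1)) * Real.exp (∑ k ∈ Finset.Icc t n, c k) := by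
    intro n hn1
    induction n, hn1 using Nat.le_induction with
    | base =>
      intro h1K
      have h1 : (1 : ℕ) ∈ Finset.Icc 1 K := Finset.mem_Icc.mpr ⟨le_refl 1, h1K⟩
      have := key 1 h1
      simp only [Nat.sub_self, Finset.Icc_self, Finset.sum_singleton] at this ⊢
      rw [show Finset.Icc 1 0 = ∅ by rfl] at this
      simp [hw0] at this ⊢
      linarith
    | succ n hn ih =>
      intro hnK
      have hnK' : n ≤ K := by omega
      have hmem : n + 1 ∈ Finset.Icc 1 K := Finset.mem_Icc.mpr ⟨by omega, hnK⟩
      have hkey := key (n + 1) hmem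
      rw [Nat.add_sub_cancel] at hkey
      have ihe := ih hnK'
      -- RHS at n+1
      conv_rhs => rw [Finset.sum_Icc_succ_top (show 1 ≤ n + 1 by omega)]
      have hsplit : ∀ t ∈ Finset.Icc 1 n,
          (w t - w (t - 1)) * Real.exp (∑ k ∈ Finset.Icc t (n + 1), c k)
            = ((w t - w (t - 1)) * Real.exp (∑ k ∈ Finset.Icc t n, c k)) * Real.exp (c (n + 1)) := by
        intro t ht
        have htn : t ≤ n + 1 := by
          have := (Finset.mem_Icc.mp ht).2; omega
        rw [Finset.sum_Icc_succ_top htn, Real.exp_add]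
        ring
      rw [Finset.sum_congr rfl hsplit, ← Finset.sum_mul, ← ihe]
      simp only [Nat.add_sub_cancel, Finset.Icc_self, Finset.sum_singleton]
      have : ((∑ h ∈ Finset.Icc 1 n, q h) + w (n + 1)) * Real.exp (c (n + 1))
          = (∑ h ∈ Finset.Icc 1 (n + 1), q h) + w (n + 1) := hkey
      nlinarith [this]
  have := main K hK le_rfl
  linarith
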